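/- Let (X,B,μ,T) be an invertible measure-preserving system, let P be a sub-σ-algebra of B with T⁻¹P ⊆ P, let f ∈ L²(μ), let m, n be positive integers, and set g = E(f | T^m P) and h = E(g | T^{−n} P). If a_i, a_j are nonnegative integers with a_j − m ≥ n + a_i, then ∫ (g∘T^{a_i})·(g∘T^{a_j}) dμ = ∫ (h∘T^{a_i})·(g∘T^{a_j}) dμ and ∫ (h∘T^{a_i})·(h∘T^{a_j}) dμ = ∫ (g∘T^{a_i})·(h∘T^{a_j}) dμ. -/

import Mathlib

open Filter MeasureTheory Topology

open scoped ENNReal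

section Aux
lemma aux_integrable_mul_of_memLp_two {X : Type*} [m0 : MeasurableSpace X]
    {μ : MeasureTheory.Measure X} {u v : X → ℝ} (hu : MemLp u 2 μ) (hv : MemLp v 2 μ) :
    Integrable (fun x => u x * v x) μ := by
  have h : (1 : ℝ≥0∞) / 1 = 1 / 2 + 1 / 2 := by
    rw [one_div_one, ENNReal.add_halves]
  have := hv.smul (r := 1) hu
  rw [memLp_one_iff_integrable] at this
  exact this

lemma aux_memLp_two_condexp {X : Type*} {A : MeasurableSpace X} [m0 : MeasurableSpace X]
    {μ : MeasureTheory.Measure X} [IsFiniteMeasure μ] (hA : A ≤ m0)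
    {u : X → ℝ} (hu : MemLp u 2 μ) : MemLp (μ[u|A]) 2 μ := by
  set G : Lp ℝ 2 μ := (condExpL2 ℝ ℝ hA (hu.toLp u) : Lp ℝ 2 μ) with hGdef
  have hG : (G : X → ℝ) =ᵐ[μ] μ[u|A] := by
    refine ae_eq_condExp_of_forall_setIntegral_eq hA (hu.integrable one_le_two) ?_ ?_ ?_
    · intro s _ _
      exact ((Lp.memLp G).integrable one_le_two).integrableOn
    · intro s hs hμs
      have h1 : ∫ x in s, (G : X → ℝ) x ∂μ = ∫ x in s, (hu.toLp u : X → ℝ) x ∂μ :=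
        integral_condExpL2_eq hA (hu.toLp u) hs hμs.ne
      rw [h1]
      exact setIntegral_congr_ae (hA s hs) ((MemLp.coeFn_toLp hu).mono fun x hx _ => hx)
    · exact aestronglyMeasurable_condExpL2 hA (hu.toLp u)
  exact (Lp.memLp G).ae_eq hG

lemma aux_condexp_comp {X : Type*} {A : MeasurableSpace X} [m0 : MeasurableSpace X]
    {μ : MeasureTheory.Measure X} [IsProbabilityMeasure μ]
    {S : X → X} (hS : MeasureTheory.MeasurePreserving S μ μ) (hSe : MeasurableEmbedding S)
    (hA : A ≤ m0) {u : X → ℝ} (hu : Integrable u μ) :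
    (fun x => (μ[u|A]) (S x)) =ᵐ[μ] μ[(fun x => u (S x))| MeasurableSpace.comap S A] := by
  have hAS : MeasurableSpace.comap S A ≤ m0 := by
    rintro s ⟨t, ht, rfl⟩
    exact hS.measurable (hA t ht)
  refine ae_eq_condExp_of_forall_setIntegral_eq hAS ?_ ?_ ?_ ?_
  · have := (memLp_one_iff_integrable.mpr hu).comp_measurePreserving hS
    exact memLp_one_iff_integrable.mp this
  · intro s _ _
    have := (memLp_one_iff_integrable.mpr (integrable_condExp (m := A) (f := u))).comp_measurePreserving hS
    exact (memLp_one_iff_integrable.mp this).integrableOn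
  · rintro s ⟨t, ht, rfl⟩ _
    calc ∫ x in S ⁻¹' t, (μ[u|A]) (S x) ∂μ = ∫ y in t, (μ[u|A]) y ∂μ :=
          hS.setIntegral_preimage_emb hSe _ t
      _ = ∫ y in t, u y ∂μ := setIntegral_condExp hA hu ht
      _ = ∫ x in S ⁻¹' t, u (S x) ∂μ := (hS.setIntegral_preimage_emb hSe _ t).symm
  · exact (stronglyMeasurable_condExp.comp_measurable
      (measurable_iff_comap_le.mpr le_rfl)).aestronglyMeasurable

lemma aux_integral_condexp_mul {X : Type*} {A : MeasurableSpace X} [m0 : MeasurableSpace X]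
    {μ : MeasureTheory.Measure X} [IsProbabilityMeasure μ] (hA : A ≤ m0)
    {u φ : X → ℝ} (hφ : AEStronglyMeasurable[A] φ μ) (hu : Integrable u μ)
    (huφ : Integrable (fun x => φ x * u x) μ) :
    ∫ x, u x * φ x ∂μ = ∫ x, (μ[u|A]) x * φ x ∂μ := by
  have h2 : μ[(φ * u)|A] =ᵐ[μ] φ * μ[u|A] := condExp_mul_of_aestronglyMeasurable_left hφ huφ hu
  calc ∫ x, u x * φ x ∂μ = ∫ x, (φ * u) x ∂μ := by
        simp only [Pi.mul_apply, mul_comm]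
    _ = ∫ x, (μ[(φ * u)|A]) x ∂μ := (integral_condExp hA).symm
    _ = ∫ x, (φ * μ[u|A]) x ∂μ := integral_congr_ae h2
    _ = ∫ x, (μ[u|A]) x * φ x ∂μ := by
        simp only [Pi.mul_apply, mul_comm]

lemma aux_comap_iterate_le {X : Type*} (P : MeasurableSpace X) {T : X → X}
    (hTP : MeasurableSpace.comap T P ≤ P) :
    ∀ k : ℕ, MeasurableSpace.comap T^[k] P ≤ P := by
  intro k
  induction k with
  | zero => simp [MeasurableSpace.comap_id]
  | succ k ih =>
    have h1 : T^[k+1] = T^[k] ∘ T := Function.iterate_succ _ _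
    calc MeasurableSpace.comap T^[k+1] P
        = MeasurableSpace.comap T (MeasurableSpace.comap T^[k] P) := by
          rw [h1, ← MeasurableSpace.comap_comp]
      _ ≤ MeasurableSpace.comap T P := MeasurableSpace.comap_mono ih
      _ ≤ P := hTP

lemma aux_comap_iterate_add {X : Type*} (P : MeasurableSpace X) (T : X → X) (a b : ℕ) :
    MeasurableSpace.comap T^[a] (MeasurableSpace.comap T^[b] P)
      = MeasurableSpace.comap T^[b + a] P := by
  rw [MeasurableSpace.comap_comp, ← Function.iterate_add]

lemma aux_comap_iterate_mono {X : Type*} (P : MeasurableSpace X) {T : X → X}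
    (hTP : MeasurableSpace.comap T P ≤ P) {k l : ℕ} (hkl : k ≤ l) :
    MeasurableSpace.comap T^[l] P ≤ MeasurableSpace.comap T^[k] P := by
  obtain ⟨d, rfl⟩ := Nat.exists_eq_add_of_le hkl
  have h1 : T^[k + d] = T^[d] ∘ T^[k] := by
    rw [add_comm]; exact Function.iterate_add _ _ _
  calc MeasurableSpace.comap T^[k+d] P
      = MeasurableSpace.comap T^[k] (MeasurableSpace.comap T^[d] P) := by
        rw [h1, ← MeasurableSpace.comap_comp]
    _ ≤ MeasurableSpace.comap T^[k] P :=
        MeasurableSpace.comap_mono (aux_comap_iterate_le P hTP d)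

end Aux

/-- Claim 1 in the proof of Theorem 3.2 of the paper: with `g = E(f | T^m P)` and
`h = E(g | T^{-n} P)`, if `a_j - m ≥ n + a_i` then
`∫ g∘T^{a_i} · g∘T^{a_j} dμ = ∫ h∘T^{a_i} · g∘T^{a_j} dμ` and
`∫ h∘T^{a_i} · h∘T^{a_j} dμ = ∫ g∘T^{a_i} · h∘T^{a_j} dμ`.
Here `T^m P = {T^m A : A ∈ P}` is realized as `MeasurableSpace.comap (T.symm)^[m] P`
and `T^{-n} P = MeasurableSpace.comap T^[n] P`. -/
theorem condexp_iterate_product_integrals_claim1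
    {X : Type*} (P : MeasurableSpace X) [m0 : MeasurableSpace X]
    (μ : Measure X) [IsProbabilityMeasure μ]
    (T : X ≃ᵐ X) (hT : MeasurePreserving (⇑T) μ μ)
    (hPm : P ≤ m0) (hTP : MeasurableSpace.comap (⇑T) P ≤ P)
    (f : X → ℝ) (hf : MemLp f 2 μ)
    (m n : ℕ) (hm : 0 < m) (hn : 0 < n)
    (g h : X → ℝ)
    (hg : g = μ[f| MeasurableSpace.comap ((⇑T.symm)^[m]) P])
    (hh : h = μ[g| MeasurableSpace.comap ((⇑T)^[n]) P])
    (ai aj : ℕ) (hij : n + ai + m ≤ aj) :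
    (∫ x, g ((⇑T)^[ai] x) * g ((⇑T)^[aj] x) ∂μ
      = ∫ x, h ((⇑T)^[ai] x) * g ((⇑T)^[aj] x) ∂μ) ∧
    (∫ x, h ((⇑T)^[ai] x) * h ((⇑T)^[aj] x) ∂μ
      = ∫ x, g ((⇑T)^[ai] x) * h ((⇑T)^[aj] x) ∂μ) := by
  -- basic facts about iterates of T
  have hTemb : ∀ k : ℕ, MeasurableEmbedding ((⇑T)^[k]) := by
    intro k
    induction k with
    | zero => simpa using MeasurableEmbedding.id
    | succ k ih =>
      rw [Function.iterate_succ]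
      exact ih.comp T.measurableEmbedding
  have hTmp : ∀ k : ℕ, MeasurePreserving ((⇑T)^[k]) μ μ := fun k => hT.iterate k
  -- σ-algebras
  have hQm0 : ∀ k : ℕ, MeasurableSpace.comap ((⇑T)^[k]) P ≤ m0 := fun k =>
    (aux_comap_iterate_le P hTP k).trans hPm
  have hBle : MeasurableSpace.comap ((⇑T.symm)^[m]) P ≤ m0 := by
    rintro s ⟨t, ht, rfl⟩
    exact (T.symm.measurable.iterate m) (hPm t ht)
  have hAm0 : MeasurableSpace.comap ((⇑T)^[n + ai]) P ≤ m0 := hQm0 (n + ai)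
  -- measurability of g ∘ T^[aj] w.r.t. A
  have hmaj : m ≤ aj := le_trans (Nat.le_add_left m (n + ai)) hij
  have hBcomp : MeasurableSpace.comap ((⇑T)^[aj]) (MeasurableSpace.comap ((⇑T.symm)^[m]) P)
      = MeasurableSpace.comap ((⇑T)^[aj - m]) P := by
    rw [MeasurableSpace.comap_comp]
    congr 1
    funext x
    have h1 : (⇑T)^[aj] x = (⇑T)^[m] ((⇑T)^[aj - m] x) := by
      rw [← Function.iterate_add_apply]
      congr 1
      omega
    show (⇑T.symm)^[m] ((⇑T)^[aj] x) = (⇑T)^[aj - m] x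
    rw [h1, Function.LeftInverse.iterate T.symm_apply_apply m _]
  have hg_meas : StronglyMeasurable[MeasurableSpace.comap ((⇑T.symm)^[m]) P] g :=
    hg ▸ stronglyMeasurable_condExp
  have hh_meas : StronglyMeasurable[MeasurableSpace.comap ((⇑T)^[n]) P] h :=
    hh ▸ stronglyMeasurable_condExp
  have hgj : StronglyMeasurable[MeasurableSpace.comap ((⇑T)^[n + ai]) P] (fun x => g ((⇑T)^[aj] x)) := by
    have h1 : StronglyMeasurable[MeasurableSpace.comap ((⇑T)^[aj])
        (MeasurableSpace.comap ((⇑T.symm)^[m]) P)] (g ∘ (⇑T)^[aj]) :=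
      hg_meas.comp_measurable (measurable_iff_comap_le.mpr le_rfl)
    rw [hBcomp] at h1
    exact h1.mono (aux_comap_iterate_mono P hTP (by omega : n + ai ≤ aj - m))
  have hhj : StronglyMeasurable[MeasurableSpace.comap ((⇑T)^[n + ai]) P] (fun x => h ((⇑T)^[aj] x)) := by
    have h1 : StronglyMeasurable[MeasurableSpace.comap ((⇑T)^[aj])
        (MeasurableSpace.comap ((⇑T)^[n]) P)] (h ∘ (⇑T)^[aj]) :=
      hh_meas.comp_measurable (measurable_iff_comap_le.mpr le_rfl)
    rw [aux_comap_iterate_add P (⇑T) aj n] at h1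
    exact h1.mono (aux_comap_iterate_mono P hTP (by omega : n + ai ≤ n + aj))
  -- L² facts
  have hgL2 : MemLp g 2 μ := hg ▸ aux_memLp_two_condexp hBle hf
  have hhL2 : MemLp h 2 μ := hh ▸ aux_memLp_two_condexp (hQm0 n) hgL2
  have hgiL2 : MemLp (fun x => g ((⇑T)^[ai] x)) 2 μ := hgL2.comp_measurePreserving (hTmp ai)
  have hgjL2 : MemLp (fun x => g ((⇑T)^[aj] x)) 2 μ := hgL2.comp_measurePreserving (hTmp aj)
  have hhjL2 : MemLp (fun x => h ((⇑T)^[aj] x)) 2 μ := hhL2.comp_measurePreserving (hTmp aj)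
  -- the key identity : h ∘ T^[ai] is the conditional expectation of g ∘ T^[ai] w.r.t. A
  have hkey : (fun x => h ((⇑T)^[ai] x)) =ᵐ[μ]
      μ[(fun x => g ((⇑T)^[ai] x)) | MeasurableSpace.comap ((⇑T)^[n + ai]) P] := by
    have h1 := aux_condexp_comp (hTmp ai) (hTemb ai) (hQm0 n)
      (hgL2.integrable one_le_two)
    rw [aux_comap_iterate_add P (⇑T) ai n] at h1
    rw [hh]
    exact h1
  -- first equality
  have e1 : ∫ x, g ((⇑T)^[ai] x) * g ((⇑T)^[aj] x) ∂μ
      = ∫ x, (μ[(fun x => g ((⇑T)^[ai] x)) | MeasurableSpace.comap ((⇑T)^[n + ai]) P]) x * g ((⇑T)^[aj] x) ∂μ :=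
    aux_integral_condexp_mul hAm0 hgj.aestronglyMeasurable
      (hgiL2.integrable one_le_two)
      (aux_integrable_mul_of_memLp_two hgjL2 hgiL2)
  have e1' : ∫ x, (μ[(fun x => g ((⇑T)^[ai] x)) | MeasurableSpace.comap ((⇑T)^[n + ai]) P]) x * g ((⇑T)^[aj] x) ∂μ
      = ∫ x, h ((⇑T)^[ai] x) * g ((⇑T)^[aj] x) ∂μ := by
    refine integral_congr_ae ?_
    filter_upwards [hkey] with x hx
    rw [hx]
  -- second equality
  have e2 : ∫ x, g ((⇑T)^[ai] x) * h ((⇑T)^[aj] x) ∂μ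
      = ∫ x, (μ[(fun x => g ((⇑T)^[ai] x)) | MeasurableSpace.comap ((⇑T)^[n + ai]) P]) x * h ((⇑T)^[aj] x) ∂μ :=
    aux_integral_condexp_mul hAm0 hhj.aestronglyMeasurable
      (hgiL2.integrable one_le_two)
      (aux_integrable_mul_of_memLp_two hhjL2 hgiL2)
  have e2' : ∫ x, (μ[(fun x => g ((⇑T)^[ai] x)) | MeasurableSpace.comap ((⇑T)^[n + ai]) P]) x * h ((⇑T)^[aj] x) ∂μ
      = ∫ x, h ((⇑T)^[ai] x) * h ((⇑T)^[aj] x) ∂μ := by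
    refine integral_congr_ae ?_
    filter_upwards [hkey] with x hx
    rw [hx]
  exact ⟨e1.trans e1', (e2.trans e2').symm⟩
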